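/- Let (Mⁿ,g,f,λ), n ≥ 3, be a gradient ρ-Einstein soliton with vanishing Cotton tensor. Then for all vector fields X, Y, Z: Rm(X,Y,Z,∇f) = ((1 − 2(n−1)ρ)/(2(n−1)))·(⟨∇R,Y⟩⟨X,Z⟩ − ⟨∇R,X⟩⟨Y,Z⟩). -/

import Mathlib

open Matrix

/-- For a gradient ρ-Einstein soliton with vanishing Cotton tensor (eq. (eq_2)):
Rm(X,Y,Z,∇f) = ((1−2(n−1)ρ)/(2(n−1)))(⟨∇R,Y⟩⟨X,Z⟩ − ⟨∇R,X⟩⟨Y,Z⟩).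
Pointwise in an orthonormal frame (g = δ); the soliton equation gives
∇ᵢR_{jk} = ρ∇ᵢR g_{jk} − ∇ᵢ∇ⱼ∇ₖf, and the Ricci identity
∇ᵢ∇ⱼ∇ₖf − ∇ⱼ∇ᵢ∇ₖf = R_{ijkl}∇^l f; C = 0 is assumed. -/
theorem stmt_9 (n : ℕ) (hn : 3 ≤ n) (ρ lam : ℝ)
    (DRic D3f : Fin n → Fin n → Fin n → ℝ)
    (Rm : Fin n → Fin n → Fin n → Fin n → ℝ)
    (dR gradf : Fin n → ℝ) (g : Fin n → Fin n → ℝ)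
    (hg : ∀ i j, g i j = if i = j then 1 else 0)
    (hCzero : ∀ i j k, DRic i j k - DRic j i k
      - (1 / (2 * ((n : ℝ) - 1))) * (g j k * dR i - g i k * dR j) = 0)
    (hsolD : ∀ i j k, DRic i j k = ρ * dR i * g j k - D3f i j k)
    (hRicciId : ∀ i j k, D3f i j k - D3f j i k = ∑ l, Rm i j k l * gradf l) :
    ∀ X Y Z : Fin n → ℝ,
      (∑ i, ∑ j, ∑ k, ∑ l, Rm i j k l * X i * Y j * Z k * gradf l) =
        ((1 - 2 * ((n : ℝ) - 1) * ρ) / (2 * ((n : ℝ) - 1)))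
          * ((dR ⬝ᵥ Y) * (X ⬝ᵥ Z) - (dR ⬝ᵥ X) * (Y ⬝ᵥ Z)) := by
  intro X Y Z
  have hn3 : (3:ℝ) ≤ (n:ℝ) := by exact_mod_cast hn
  have hne : (2 * ((n:ℝ) - 1)) ≠ 0 := by nlinarith
  set c : ℝ := (1 - 2 * ((n : ℝ) - 1) * ρ) / (2 * ((n : ℝ) - 1)) with hc
  have hcval : c = 1 / (2 * ((n:ℝ) - 1)) - ρ := by
    rw [hc, eq_sub_iff_add_eq, div_add' _ _ _ hne]; ring
  have key : ∀ i j k, (∑ l, Rm i j k l * gradf l)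
      = c * (dR j * g i k - dR i * g j k) := by
    intro i j k
    have e1 : D3f i j k = ρ * dR i * g j k - DRic i j k := by
      have := hsolD i j k; linarith
    have e2 : D3f j i k = ρ * dR j * g i k - DRic j i k := by
      have := hsolD j i k; linarith
    rw [← hRicciId i j k, e1, e2, hcval]
    linear_combination - hCzero i j k
  calc (∑ i, ∑ j, ∑ k, ∑ l, Rm i j k l * X i * Y j * Z k * gradf l)
      = ∑ i, ∑ j, ∑ k, (X i * Y j * Z k) * (∑ l, Rm i j k l * gradf l) := by
        refine Finset.sum_congr rfl fun i _ => Finset.sum_congr rfl fun j _ =>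
          Finset.sum_congr rfl fun k _ => ?_
        rw [Finset.mul_sum]; apply Finset.sum_congr rfl; intro l _; ring
    _ = ∑ i, ∑ j, ∑ k, (X i * Y j * Z k) * (c * (dR j * g i k - dR i * g j k)) := by
        simp only [key]
    _ = ∑ i, ∑ j, (c * (X i * Y j * dR j * Z i) - c * (X i * Y j * dR i * Z j)) := by
        refine Finset.sum_congr rfl fun i _ => Finset.sum_congr rfl fun j _ => ?_
        simp [hg, mul_sub, mul_ite, Finset.sum_sub_distrib, Finset.sum_ite_eq]
        ring
    _ = c * ((dR ⬝ᵥ Y) * (X ⬝ᵥ Z) - (dR ⬝ᵥ X) * (Y ⬝ᵥ Z)) := by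
        simp only [dotProduct, Finset.sum_sub_distrib, Finset.sum_mul, Finset.mul_sum,
          mul_sub]
        congr 1
        · exact Finset.sum_congr rfl fun i _ => Finset.sum_congr rfl fun j _ => by ring
        · rw [Finset.sum_comm]
          exact Finset.sum_congr rfl fun j _ => Finset.sum_congr rfl fun i _ => by ring
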